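/- The degree set of any finitely generated Z^d-graded module M over an affine semigroup ring k[Q] is a finite union of sets of the form a_i + NF_i, where each F_i is a face of Q and a_i ∈ Z^d. -/

import Mathlib

set_option synthInstance.maxHeartbeats 800000
set_option maxHeartbeats 1600000

/-!
STATEMENT 5: The degree set of any finitely generated ℤ^d-graded module M over an
affine semigroup ring k[Q] is a finite union of sets of the form aᵢ + ℕFᵢ, where
each Fᵢ is a face of Q and aᵢ ∈ ℤ^d.
-/

open scoped BigOperators

noncomputable section

def IsFace {d : ℕ} (Q F : AddSubmonoid (Fin d → ℤ)) : Prop :=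
  F ≤ Q ∧ ∀ a b : Fin d → ℤ, a ∈ Q → b ∈ Q → (a + b ∈ F ↔ a ∈ F ∧ b ∈ F)

/-- The translate `a + ℕF` of the face `F` by `a`. -/
def transSet {d : ℕ} (a : Fin d → ℤ) (F : AddSubmonoid (Fin d → ℤ)) : Set (Fin d → ℤ) :=
  {x | ∃ f ∈ F, x = a + f}

/-- A proper pair for a degree set `D` relative to the semigroup `Q'`:
a pair `(a, F)` with `F` a face of `Q'` and `a + ℕF ⊆ D`. -/
def IsProperPair {d : ℕ} (Q' : AddSubmonoid (Fin d → ℤ)) (D : Set (Fin d → ℤ))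
    (p : (Fin d → ℤ) × AddSubmonoid (Fin d → ℤ)) : Prop :=
  IsFace Q' p.2 ∧ transSet p.1 p.2 ⊆ D

/-- The partial order on proper pairs: `(a,F) ≤ (b,G)` iff `a + ℕF ⊆ b + ℕG`. -/
def pairLE {d : ℕ} (p q : (Fin d → ℤ) × AddSubmonoid (Fin d → ℤ)) : Prop :=
  transSet p.1 p.2 ⊆ transSet q.1 q.2

/-- A degree pair: a proper pair maximal in the order `pairLE`. -/
def IsDegreePair {d : ℕ} (Q' : AddSubmonoid (Fin d → ℤ)) (D : Set (Fin d → ℤ))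
    (p : (Fin d → ℤ) × AddSubmonoid (Fin d → ℤ)) : Prop :=
  IsProperPair Q' D p ∧
    ∀ q, IsProperPair Q' D q → pairLE p q → pairLE q p

namespace DegAux

variable {d : ℕ}

/-- monoid ideal of `Q` -/
def IsIdl (Q : AddSubmonoid (Fin d → ℤ)) (S : Set (Fin d → ℤ)) : Prop :=
  S ⊆ (Q : Set (Fin d → ℤ)) ∧ ∀ s ∈ S, ∀ q ∈ Q, s + q ∈ S

/-- finite union of translates of faces, finset version -/
def GoodF (Q : AddSubmonoid (Fin d → ℤ)) (T : Set (Fin d → ℤ)) : Prop :=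
  ∃ P : Finset ((Fin d → ℤ) × AddSubmonoid (Fin d → ℤ)),
    (∀ p ∈ P, IsFace Q p.2) ∧ T = ⋃ p ∈ P, transSet p.1 p.2

theorem goodF_empty (Q : AddSubmonoid (Fin d → ℤ)) : GoodF Q (∅ : Set (Fin d → ℤ)) :=
  ⟨∅, by simp, by simp⟩

theorem goodF_union {Q : AddSubmonoid (Fin d → ℤ)} {T T' : Set (Fin d → ℤ)}
    (h : GoodF Q T) (h' : GoodF Q T') : GoodF Q (T ∪ T') := by
  classical
  obtain ⟨P, hP, rfl⟩ := h
  obtain ⟨P', hP', rfl⟩ := h'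
  refine ⟨P ∪ P', fun p hp => ?_, ?_⟩
  · rcases Finset.mem_union.1 hp with hp | hp
    · exact hP p hp
    · exact hP' p hp
  · rw [Finset.set_biUnion_union]

def tr (t : Fin d → ℤ) (T : Set (Fin d → ℤ)) : Set (Fin d → ℤ) := (t + ·) '' T

theorem tr_transSet (t a : Fin d → ℤ) (F : AddSubmonoid (Fin d → ℤ)) :
    tr t (transSet a F) = transSet (t + a) F := by
  ext x
  simp only [tr, transSet, Set.mem_image, Set.mem_setOf_eq]
  constructor
  · rintro ⟨y, ⟨f, hf, rfl⟩, rfl⟩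
    exact ⟨f, hf, (add_assoc t a f).symm⟩
  · rintro ⟨f, hf, rfl⟩
    exact ⟨a + f, ⟨f, hf, rfl⟩, (add_assoc t a f).symm⟩

theorem goodF_tr {Q : AddSubmonoid (Fin d → ℤ)} {T : Set (Fin d → ℤ)} (t : Fin d → ℤ)
    (h : GoodF Q T) : GoodF Q (tr t T) := by
  classical
  obtain ⟨P, hP, rfl⟩ := h
  refine ⟨P.image (fun p => (t + p.1, p.2)), fun p hp => ?_, ?_⟩
  · obtain ⟨q, hq, rfl⟩ := Finset.mem_image.1 hp
    exact hP q hq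
  · rw [Finset.set_biUnion_finset_image, tr, Set.image_iUnion₂]
    exact Set.iUnion₂_congr fun p _ => tr_transSet t p.1 p.2

variable (A : Finset (Fin d → ℤ))

/-- the evaluation map `ℕ^A → ℤ^d` -/
def Phi (u : (A : Set (Fin d → ℤ)) →₀ ℕ) : Fin d → ℤ :=
  u.sum fun a n => n • (a : Fin d → ℤ)

theorem Phi_add (u v : (A : Set (Fin d → ℤ)) →₀ ℕ) : Phi A (u + v) = Phi A u + Phi A v :=
  Finsupp.sum_add_index' (fun a => zero_nsmul _) (fun a m n => add_nsmul _ m n)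

theorem Phi_mem (u : (A : Set (Fin d → ℤ)) →₀ ℕ) :
    Phi A u ∈ AddSubmonoid.closure (A : Set (Fin d → ℤ)) := by
  exact sum_mem fun a _ => AddSubmonoid.nsmul_mem _ (AddSubmonoid.subset_closure a.2) _

theorem Phi_surj {x : Fin d → ℤ} (hx : x ∈ AddSubmonoid.closure (A : Set (Fin d → ℤ))) :
    ∃ u, Phi A u = x := by
  let N : AddSubmonoid (Fin d → ℤ) :=
    { carrier := Set.range (Phi A)
      zero_mem' := ⟨0, Finsupp.sum_zero_index⟩
      add_mem' := by
        rintro _ _ ⟨u, rfl⟩ ⟨v, rfl⟩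
        exact ⟨u + v, Phi_add A u v⟩ }
  have hA : (A : Set (Fin d → ℤ)) ⊆ N := by
    intro a ha
    refine ⟨Finsupp.single ⟨a, ha⟩ 1, ?_⟩
    show (Finsupp.single (⟨a, ha⟩ : (A : Set (Fin d → ℤ))) 1).sum
        (fun a n => n • (a : Fin d → ℤ)) = a
    rw [Finsupp.sum_single_index, one_nsmul]
    exact zero_nsmul _
  exact AddSubmonoid.closure_le.2 hA hx

/-- measure of a monoid ideal: the corresponding monomial ideal in a polynomial ring -/
def idlMeas (S : Set (Fin d → ℤ)) : Ideal (MvPolynomial (A : Set (Fin d → ℤ)) ℚ) :=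
  Ideal.span ((fun u => MvPolynomial.monomial u (1 : ℚ)) '' {u | Phi A u ∈ S})

theorem idlMeas_mono {S S' : Set (Fin d → ℤ)} (h : S ⊆ S') : idlMeas A S ≤ idlMeas A S' :=
  Ideal.span_mono (Set.image_mono fun u hu => h hu)

theorem idlMeas_lt {S S' : Set (Fin d → ℤ)}
    (hS : IsIdl (AddSubmonoid.closure (A : Set (Fin d → ℤ))) S)
    (hS' : S' ⊆ (AddSubmonoid.closure (A : Set (Fin d → ℤ)) : Set (Fin d → ℤ)))
    (hsub : S ⊆ S') {x : Fin d → ℤ} (hx : x ∈ S') (hxn : x ∉ S) :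
    idlMeas A S < idlMeas A S' := by
  obtain ⟨u₀, hu₀⟩ := Phi_surj A (hS' hx)
  refine lt_of_le_of_ne (idlMeas_mono A hsub) (fun he => ?_)
  have hmem : MvPolynomial.monomial u₀ (1 : ℚ) ∈ idlMeas A S' :=
    Ideal.subset_span ⟨u₀, by simp [hu₀, hx], rfl⟩
  rw [← he, idlMeas, MvPolynomial.mem_ideal_span_monomial_image] at hmem
  obtain ⟨u, hu, hle⟩ := hmem u₀ (by
    rw [MvPolynomial.support_monomial]
    simp)
  have : Phi A u₀ = Phi A u + Phi A (u₀ - u) := by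
    rw [← Phi_add, add_tsub_cancel_of_le hle]
  apply hxn
  rw [← hu₀, this]
  exact hS.2 _ hu _ (Phi_mem A _)

theorem goodF_sdiff :
    ∀ S : Set (Fin d → ℤ), IsIdl (AddSubmonoid.closure (A : Set (Fin d → ℤ))) S →
      GoodF (AddSubmonoid.closure (A : Set (Fin d → ℤ)))
        ((AddSubmonoid.closure (A : Set (Fin d → ℤ)) : Set (Fin d → ℤ)) \ S) := by
  set Q := AddSubmonoid.closure (A : Set (Fin d → ℤ)) with hQdef
  have wfI : WellFounded ((· > ·) : Ideal (MvPolynomial (A : Set (Fin d → ℤ)) ℚ) →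
      Ideal (MvPolynomial (A : Set (Fin d → ℤ)) ℚ) → Prop) := by
    have : IsNoetherianRing (MvPolynomial (A : Set (Fin d → ℤ)) ℚ) := by infer_instance
    exact isNoetherian_iff.mp this
  have wf : WellFounded (fun S' S : Set (Fin d → ℤ) => idlMeas A S < idlMeas A S') :=
    InvImage.wf (idlMeas A) wfI
  intro S
  induction S using wf.induction with
  | _ S IH =>
  intro hS
  by_cases hT : ∀ t ∈ (Q : Set (Fin d → ℤ)) \ S, ∀ f ∈ Q, t + f ∈ S → f ∈ S
  · -- the complement is a face (or empty)
    by_cases h0 : (0 : Fin d → ℤ) ∈ S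
    · have : (Q : Set (Fin d → ℤ)) \ S = ∅ := by
        apply Set.eq_empty_of_forall_notMem
        rintro x ⟨hxQ, hxS⟩
        exact hxS (by simpa using hS.2 _ h0 _ hxQ)
      rw [this]; exact goodF_empty Q
    · have h0Q : (0 : Fin d → ℤ) ∈ Q := Q.zero_mem
      refine ⟨{((0 : Fin d → ℤ),
        { carrier := (Q : Set (Fin d → ℤ)) \ S
          zero_mem' := ⟨h0Q, h0⟩
          add_mem' := by
            rintro a b ⟨haQ, haS⟩ ⟨hbQ, hbS⟩
            refine ⟨Q.add_mem haQ hbQ, fun hab => hbS (hT a ⟨haQ, haS⟩ b hbQ hab)⟩ })}, ?_, ?_⟩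
      · intro p hp
        rw [Finset.mem_singleton] at hp
        subst hp
        constructor
        · intro x hx; exact hx.1
        · intro a b ha hb
          constructor
          · intro hab
            constructor
            · exact ⟨ha, fun haS => hab.2 (hS.2 _ haS _ hb)⟩
            · exact ⟨hb, fun hbS => hab.2 (by rw [add_comm]; exact hS.2 _ hbS _ ha)⟩
          · rintro ⟨ha', hb'⟩
            exact ⟨Q.add_mem ha hb, fun hab => hb'.2 (hT a ha' b hb hab)⟩
      · ext x
        simp only [Set.mem_iUnion, Finset.mem_singleton]
        constructor
        · intro hx
          exact ⟨_, rfl, x, hx, (zero_add x).symm⟩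
        · rintro ⟨p, rfl, f, hf, rfl⟩
          rw [zero_add]
          exact hf
  · push_neg at hT
    obtain ⟨t, htQS, f₀, hf₀Q, htf₀, hf₀S⟩ := hT
    set S₁ : Set (Fin d → ℤ) := S ∪ {x | ∃ f ∈ Q, x = t + f} with hS₁def
    set S₂ : Set (Fin d → ℤ) := {f | f ∈ Q ∧ t + f ∈ S} with hS₂def
    have hS₁ : IsIdl Q S₁ := by
      constructor
      · rintro x (hx | ⟨f, hf, rfl⟩)
        · exact hS.1 hx
        · exact Q.add_mem htQS.1 hf
      · rintro s (hs | ⟨f, hf, rfl⟩) q hq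
        · exact Or.inl (hS.2 _ hs _ hq)
        · exact Or.inr ⟨f + q, Q.add_mem hf hq, add_assoc t f q⟩
    have hS₂ : IsIdl Q S₂ := by
      constructor
      · intro x hx; exact hx.1
      · rintro s ⟨hsQ, hsS⟩ q hq
        exact ⟨Q.add_mem hsQ hq, by rw [← add_assoc]; exact hS.2 _ hsS _ hq⟩
    have hSS₁ : S ⊆ S₁ := Set.subset_union_left
    have hSS₂ : S ⊆ S₂ := by
      intro s hs
      exact ⟨hS.1 hs, by rw [add_comm]; exact hS.2 _ hs _ htQS.1⟩
    have h₁ : idlMeas A S < idlMeas A S₁ :=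
      idlMeas_lt A hS hS₁.1 hSS₁ (Or.inr ⟨0, Q.zero_mem, (add_zero t).symm⟩) htQS.2
    have h₂ : idlMeas A S < idlMeas A S₂ :=
      idlMeas_lt A hS hS₂.1 hSS₂ ⟨hf₀Q, htf₀⟩ hf₀S
    have g₁ := IH S₁ h₁ hS₁
    have g₂ := IH S₂ h₂ hS₂
    have hdecomp : (Q : Set (Fin d → ℤ)) \ S =
        ((Q : Set (Fin d → ℤ)) \ S₁) ∪ tr t ((Q : Set (Fin d → ℤ)) \ S₂) := by
      ext x
      constructor
      · rintro ⟨hxQ, hxS⟩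
        by_cases hx1 : ∃ f ∈ Q, x = t + f
        · obtain ⟨f, hf, rfl⟩ := hx1
          exact Or.inr ⟨f, ⟨hf, fun h => hxS h.2⟩, rfl⟩
        · exact Or.inl ⟨hxQ, fun h => h.elim hxS hx1⟩
      · rintro (⟨hxQ, hxS⟩ | ⟨f, ⟨hfQ, hfS⟩, rfl⟩)
        · exact ⟨hxQ, fun h => hxS (Or.inl h)⟩
        · exact ⟨Q.add_mem htQS.1 hfQ, fun h => hfS ⟨hfQ, h⟩⟩
    rw [hdecomp]
    exact goodF_union g₁ (goodF_tr t g₂)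


theorem goodF_iUnion_fin {Q : AddSubmonoid (Fin d → ℤ)} :
    ∀ {n : ℕ} (f : Fin n → Set (Fin d → ℤ)), (∀ i, GoodF Q (f i)) → GoodF Q (⋃ i, f i) := by
  intro n
  induction n with
  | zero =>
    intro f _
    rw [Set.iUnion_of_empty]
    exact goodF_empty Q
  | succ n IH =>
    intro f h
    have hsplit : (⋃ i, f i) = f 0 ∪ ⋃ i : Fin n, f i.succ := by
      ext x
      simp only [Set.mem_iUnion, Set.mem_union]
      constructor
      · rintro ⟨i, hi⟩
        rcases Fin.eq_zero_or_eq_succ i with rfl | ⟨j, rfl⟩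
        · exact Or.inl hi
        · exact Or.inr ⟨j, hi⟩
      · rintro (h0 | ⟨j, hj⟩)
        · exact ⟨0, h0⟩
        · exact ⟨j.succ, hj⟩
    rw [hsplit]
    exact goodF_union (h 0) (IH _ fun i => h i.succ)


section ModulePart

variable (k : Type) [Field k] (A : Finset (Fin d → ℤ))
variable (M : Type) [AddCommGroup M]
  [Module (AddMonoidAlgebra k (AddSubmonoid.closure (A : Set (Fin d → ℤ)))) M]
  [Module k M]
  [IsScalarTower k (AddMonoidAlgebra k (AddSubmonoid.closure (A : Set (Fin d → ℤ)))) M]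

local notation "Q" => AddSubmonoid.closure (A : Set (Fin d → ℤ))
local notation "R" => AddMonoidAlgebra k (AddSubmonoid.closure (A : Set (Fin d → ℤ)))

theorem scc : SMulCommClass k R M := by
  constructor
  intro c r x
  calc c • (r • x) = (c • r) • x := (smul_assoc c r x).symm
    _ = ((c • (1 : R)) * r) • x := by rw [smul_mul_assoc, one_mul]
    _ = (r * (c • (1 : R))) • x := by rw [mul_comm]
    _ = r • ((c • (1 : R)) • x) := mul_smul _ _ _
    _ = r • (c • ((1 : R) • x)) := by rw [smul_assoc]
    _ = r • (c • x) := by rw [one_smul]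

variable (g : (Fin d → ℤ) → Submodule k M)

theorem proj_exists (hdecomp : DirectSum.IsInternal g) :
    ∃ π : (Fin d → ℤ) → (M →ₗ[k] M),
      (∀ v m, π v m ∈ g v) ∧ (∀ v m, m ∈ g v → π v m = m) ∧
      (∀ v w m, m ∈ g w → w ≠ v → π v m = 0) := by
  have h1 : iSupIndep g := hdecomp.submodule_iSupIndep
  have hcompl : ∀ v, IsCompl (g v) (⨆ w, ⨆ _ : w ≠ v, g w) := by
    intro v
    constructor
    · exact h1 v
    · rw [codisjoint_iff]
      apply le_antisymm le_top
      rw [← hdecomp.submodule_iSup_eq_top]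
      refine iSup_le fun w => ?_
      by_cases h : w = v
      · subst h; exact le_sup_left
      · exact le_trans (le_iSup₂ (f := fun j (_ : j ≠ v) => g j) w h) le_sup_right
  refine ⟨fun v => (g v).subtype ∘ₗ Submodule.linearProjOfIsCompl _ _ (hcompl v),
    fun v m => ?_, fun v m hm => ?_, fun v w m hm hne => ?_⟩
  · exact Submodule.coe_mem _
  · exact congrArg Subtype.val (Submodule.linearProjOfIsCompl_apply_left (hcompl v) ⟨m, hm⟩)
  · have : m ∈ ⨆ w, ⨆ _ : w ≠ v, g w := (le_iSup₂ (f := fun j (_ : j ≠ v) => g j) w hne) hm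
    have h2 := Submodule.projectionOnto_apply_of_mem_right (hcompl v) this
    calc ((g v).subtype ∘ₗ Submodule.linearProjOfIsCompl _ _ (hcompl v)) m
        = ((Submodule.linearProjOfIsCompl _ _ (hcompl v)) m : M) := rfl
      _ = ((0 : g v) : M) := congrArg Subtype.val h2
      _ = 0 := rfl

theorem gens_exist (hdecomp : DirectSum.IsInternal g)
    (hfg : Module.Finite R M) :
    ∃ (s : ℕ) (mm : Fin s → M) (aa : Fin s → (Fin d → ℤ)),
      (∀ i, mm i ∈ g (aa i)) ∧ Submodule.span R (Set.range mm) = ⊤ := by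
  classical
  obtain ⟨G, hG⟩ := hfg.fg_top
  have hdec : ∀ x : M, ∃ f : (Fin d → ℤ) →₀ M, (∀ v, f v ∈ g v) ∧ (f.sum fun _ m => m) = x := by
    intro x
    have hx : x ∈ ⨆ v, g v := by
      rw [hdecomp.submodule_iSup_eq_top]; trivial
    exact (Submodule.mem_iSup_iff_exists_finsupp g x).1 hx
  choose F hF1 hF2 using hdec
  let σ := Σ x : {x // x ∈ G}, {v // v ∈ (F ↑x).support}
  refine ⟨Fintype.card σ, fun i => F ↑((Fintype.equivFin σ).symm i).1 ↑((Fintype.equivFin σ).symm i).2,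
    fun i => ↑((Fintype.equivFin σ).symm i).2, fun i => hF1 _ _, ?_⟩
  rw [← top_le_iff, ← hG, Submodule.span_le]
  intro x hx
  rw [SetLike.mem_coe, ← hF2 x]
  apply Submodule.finsuppSum_mem
  intro v hv
  apply Submodule.subset_span
  refine ⟨Fintype.equivFin σ ⟨⟨x, hx⟩, ⟨v, Finsupp.mem_support_iff.2 hv⟩⟩, ?_⟩
  show F ↑((Fintype.equivFin σ).symm ((Fintype.equivFin σ)
      ⟨⟨x, hx⟩, ⟨v, Finsupp.mem_support_iff.2 hv⟩⟩)).1
    ↑((Fintype.equivFin σ).symm ((Fintype.equivFin σ)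
      ⟨⟨x, hx⟩, ⟨v, Finsupp.mem_support_iff.2 hv⟩⟩)).2 = (F x) v
  rw [Equiv.symm_apply_apply]

variable {s : ℕ}

def Hset (mm : Fin s → M) (i : ℕ) : Set M :=
  {x | ∃ j : Fin s, (j : ℕ) < i ∧ ∃ q : Q, x = (AddMonoidAlgebra.single q (1 : k) : R) • mm j}

def Nk (mm : Fin s → M) (i : ℕ) : Submodule k M :=
  Submodule.span k (Hset k A M mm i)

theorem Nk_stab (mm : Fin s → M) (i : ℕ) (q : Q) {x : M} (hx : x ∈ Nk k A M mm i) :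
    (AddMonoidAlgebra.single q (1 : k) : R) • x ∈ Nk k A M mm i := by
  haveI := scc k A M
  induction hx using Submodule.span_induction with
  | mem y hy =>
    obtain ⟨j, hj, q', rfl⟩ := hy
    rw [← mul_smul, AddMonoidAlgebra.single_mul_single, one_mul]
    exact Submodule.subset_span ⟨j, hj, q + q', rfl⟩
  | zero => rw [smul_zero]; exact Submodule.zero_mem _
  | add y z _ _ hy hz => rw [smul_add]; exact Submodule.add_mem _ hy hz
  | smul c y _ hy =>
    rw [smul_comm]
    exact Submodule.smul_mem _ c hy

theorem Nk_Rsmul (mm : Fin s → M) (i : ℕ) (r : R) {x : M} (hx : x ∈ Nk k A M mm i) :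
    r • x ∈ Nk k A M mm i := by
  induction r using AddMonoidAlgebra.induction_on with
  | of q =>
    have : (AddMonoidAlgebra.of k _ (Multiplicative.ofAdd q)) = (AddMonoidAlgebra.single q (1:k) : R) := by
      rfl
    rw [this]
    exact Nk_stab k A M mm i q hx
  | add f₁ f₂ h₁ h₂ => rw [add_smul]; exact Submodule.add_mem _ h₁ h₂
  | smul c f hf =>
    rw [smul_assoc]
    exact Submodule.smul_mem _ c hf

theorem Nk_grade (mm : Fin s → M) (aa : Fin s → (Fin d → ℤ)) (hmm : ∀ j, mm j ∈ g (aa j))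
    (hgsmul : ∀ (q : Q) (v : Fin d → ℤ) (m : M), m ∈ g v →
      (AddMonoidAlgebra.single q (1 : k) : R) • m ∈ g ((q : Fin d → ℤ) + v))
    (π : (Fin d → ℤ) → (M →ₗ[k] M))
    (hπ1 : ∀ v m, m ∈ g v → π v m = m) (hπ2 : ∀ v w m, m ∈ g w → w ≠ v → π v m = 0)
    (i : ℕ) (v : Fin d → ℤ) {x : M} (hx : x ∈ Nk k A M mm i) :
    π v x ∈ Nk k A M mm i := by
  induction hx using Submodule.span_induction with
  | mem y hy =>
    obtain ⟨j, hj, q, rfl⟩ := hy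
    have hmem : (AddMonoidAlgebra.single q (1 : k) : R) • mm j ∈ g ((q : Fin d → ℤ) + aa j) :=
      hgsmul q (aa j) (mm j) (hmm j)
    by_cases h : (q : Fin d → ℤ) + aa j = v
    · rw [hπ1 v _ (h ▸ hmem)]
      exact Submodule.subset_span ⟨j, hj, q, rfl⟩
    · rw [hπ2 v _ _ hmem h]
      exact Submodule.zero_mem _
  | zero => rw [map_zero]; exact Submodule.zero_mem _
  | add y z _ _ hy hz => rw [map_add]; exact Submodule.add_mem _ hy hz
  | smul c y _ hy => rw [map_smul]; exact Submodule.smul_mem _ c hy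

theorem Nk_zero (mm : Fin s → M) : Nk k A M mm 0 = ⊥ := by
  rw [Nk, Submodule.span_eq_bot]
  rintro x ⟨j, hj, -⟩
  omega

theorem Nk_succ_mem (mm : Fin s → M) (i : ℕ) (hi : i < s) {u : M}
    (hu : u ∈ Nk k A M mm (i + 1)) :
    ∃ y ∈ Nk k A M mm i, ∃ c : Q →₀ k,
      u = y + c.sum fun q coeff =>
        coeff • ((AddMonoidAlgebra.single q (1 : k) : R) • mm ⟨i, hi⟩) := by
  have hH : Hset k A M mm (i + 1) = Hset k A M mm i ∪
      Set.range (fun q : Q => (AddMonoidAlgebra.single q (1 : k) : R) • mm ⟨i, hi⟩) := by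
    ext x
    constructor
    · rintro ⟨j, hj, q, rfl⟩
      rcases Nat.lt_succ_iff_lt_or_eq.1 hj with h | h
      · exact Or.inl ⟨j, h, q, rfl⟩
      · refine Or.inr ⟨q, ?_⟩
        have : j = ⟨i, hi⟩ := Fin.ext h
        rw [this]
    · rintro (⟨j, hj, q, rfl⟩ | ⟨q, rfl⟩)
      · exact ⟨j, Nat.lt_succ_of_lt hj, q, rfl⟩
      · exact ⟨⟨i, hi⟩, Nat.lt_succ_self i, q, rfl⟩
  rw [Nk, hH, Submodule.span_union] at hu
  obtain ⟨y, hy, w, hw, rfl⟩ := Submodule.mem_sup.1 hu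
  rw [Finsupp.mem_span_range_iff_exists_finsupp] at hw
  obtain ⟨c, rfl⟩ := hw
  exact ⟨y, hy, c, rfl⟩

theorem Nk_top (mm : Fin s → M) (hspan : Submodule.span R (Set.range mm) = ⊤) :
    Nk k A M mm s = ⊤ := by
  rw [eq_top_iff]
  have : Submodule.span R (Set.range mm) ≤
      { carrier := (Nk k A M mm s : Set M)
        add_mem' := fun h1 h2 => Submodule.add_mem _ h1 h2
        zero_mem' := Submodule.zero_mem _
        smul_mem' := fun r x hx => Nk_Rsmul k A M mm s r hx } := by
    rw [Submodule.span_le]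
    rintro x ⟨j, rfl⟩
    show mm j ∈ Nk k A M mm s
    have : mm j = (AddMonoidAlgebra.single (0 : Q) (1 : k) : R) • mm j := by
      rw [← AddMonoidAlgebra.one_def, one_smul]
    rw [this]
    exact Submodule.subset_span ⟨j, j.isLt, 0, rfl⟩
  rw [hspan] at this
  exact fun x hx => this hx

def Sset (mm : Fin s → M) (i : Fin s) : Set (Fin d → ℤ) :=
  {x | ∃ hx : x ∈ Q, (AddMonoidAlgebra.single (⟨x, hx⟩ : Q) (1 : k) : R) • mm i ∈ Nk k A M mm i}

theorem Sset_idl (mm : Fin s → M) (i : Fin s) : IsIdl Q (Sset k A M mm i) := by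
  constructor
  · rintro x ⟨hx, -⟩
    exact hx
  · rintro x ⟨hx, hmem⟩ q hq
    refine ⟨AddSubmonoid.add_mem _ hx hq, ?_⟩
    have he : (⟨x + q, AddSubmonoid.add_mem _ hx hq⟩ : Q) = ⟨q, hq⟩ + ⟨x, hx⟩ := by
      apply Subtype.ext
      exact add_comm x q
    have hmul : (AddMonoidAlgebra.single (⟨q, hq⟩ + ⟨x, hx⟩) (1 : k) : R) =
        (AddMonoidAlgebra.single (⟨q, hq⟩ : Q) (1 : k) : R) *
        (AddMonoidAlgebra.single (⟨x, hx⟩ : Q) (1 : k) : R) := by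
      rw [AddMonoidAlgebra.single_mul_single, one_mul]
    rw [he, hmul, mul_smul]
    exact Nk_stab k A M mm i ⟨q, hq⟩ hmem

theorem main_module (hdecomp : DirectSum.IsInternal g)
    (hgsmul : ∀ (q : Q) (v : Fin d → ℤ) (m : M), m ∈ g v →
      (AddMonoidAlgebra.single q (1 : k) : R) • m ∈ g ((q : Fin d → ℤ) + v))
    (hfg : Module.Finite R M) :
    ∃ (n : ℕ) (aa : Fin n → (Fin d → ℤ)) (SS : Fin n → Set (Fin d → ℤ)),
      (∀ i, IsIdl Q (SS i)) ∧
      {v | g v ≠ ⊥} = ⋃ i, tr (aa i) ((Q : Set (Fin d → ℤ)) \ SS i) := by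
  classical
  obtain ⟨π, hπmem, hπ1, hπ2⟩ := proj_exists k M g hdecomp
  obtain ⟨s, mm, aa, hmm, hspan⟩ := gens_exist k A M g hdecomp hfg
  refine ⟨s, aa, fun i => Sset k A M mm i, fun i => Sset_idl k A M mm i, ?_⟩
  ext v
  simp only [Set.mem_setOf_eq, Set.mem_iUnion]
  constructor
  · -- D ⊆ union
    intro hv
    obtain ⟨u, hu, hune⟩ := (Submodule.ne_bot_iff _).1 hv
    have hPs : ∃ n : ℕ, ∃ u', u' ∈ Nk k A M mm n ∧ u' ∈ g v ∧ u' ≠ 0 := by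
      refine ⟨s, u, ?_, hu, hune⟩
      rw [Nk_top k A M mm hspan]; trivial
    set P : ℕ → Prop := fun n => ∃ u', u' ∈ Nk k A M mm n ∧ u' ∈ g v ∧ u' ≠ 0 with hPdef
    have hfind : P (Nat.find hPs) := Nat.find_spec hPs
    have hmin : ∀ m < Nat.find hPs, ¬ P m := fun m hm => Nat.find_min hPs hm
    have hne0 : Nat.find hPs ≠ 0 := by
      intro h0
      obtain ⟨u', hu', -, hune'⟩ := hfind
      rw [h0, Nk_zero] at hu'
      exact hune' (by simpa using hu')
    obtain ⟨i, hieq⟩ : ∃ i, Nat.find hPs = i + 1 := ⟨Nat.find hPs - 1, by omega⟩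
    have hi : i < s := by
      by_contra hge
      apply hmin i (by omega)
      have hHeq : Hset k A M mm (i + 1) = Hset k A M mm i := by
        ext x
        constructor
        · rintro ⟨j, hj, q, rfl⟩
          exact ⟨j, by have := j.isLt; omega, q, rfl⟩
        · rintro ⟨j, hj, q, rfl⟩
          exact ⟨j, Nat.lt_succ_of_lt hj, q, rfl⟩
      obtain ⟨u', h1, h2, h3⟩ := hieq ▸ hfind
      refine ⟨u', ?_, h2, h3⟩
      rw [Nk, ← hHeq]
      exact h1
    obtain ⟨u', hu'N, hu'g, hu'ne⟩ := hieq ▸ hfind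
    obtain ⟨y, hy, c, rfl⟩ := Nk_succ_mem k A M mm i hi hu'N
    by_cases hq : ∃ q : Q, ((q : Fin d → ℤ) + aa ⟨i, hi⟩ = v) ∧
        (AddMonoidAlgebra.single q (1 : k) : R) • mm ⟨i, hi⟩ ∉ Nk k A M mm i
    · obtain ⟨q, hqv, hqn⟩ := hq
      refine ⟨⟨i, hi⟩, (q : Fin d → ℤ), ⟨q.2, ?_⟩, ?_⟩
      · rintro ⟨hx, hmem⟩
        apply hqn
        have : (⟨(q : Fin d → ℤ), hx⟩ : Q) = q := Subtype.ext rfl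
        rwa [this] at hmem
      · rw [← hqv]
        exact add_comm _ _
    · exfalso
      push_neg at hq
      apply hmin i (by omega)
      refine ⟨y + c.sum fun q coeff =>
        coeff • ((AddMonoidAlgebra.single q (1 : k) : R) • mm ⟨i, hi⟩), ?_, hu'g, hu'ne⟩
      have heq : y + (c.sum fun q coeff =>
          coeff • ((AddMonoidAlgebra.single q (1 : k) : R) • mm ⟨i, hi⟩)) =
          π v (y + c.sum fun q coeff =>
            coeff • ((AddMonoidAlgebra.single q (1 : k) : R) • mm ⟨i, hi⟩)) :=
        (hπ1 v _ hu'g).symm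
      rw [heq, map_add, map_finsuppSum]
      apply Submodule.add_mem
      · exact Nk_grade k A M g mm aa hmm hgsmul π hπ1 hπ2 i v hy
      · apply Submodule.finsuppSum_mem
        intro q hqne
        rw [map_smul]
        apply Submodule.smul_mem
        have hmemg : (AddMonoidAlgebra.single q (1 : k) : R) • mm ⟨i, hi⟩ ∈
            g ((q : Fin d → ℤ) + aa ⟨i, hi⟩) := hgsmul q _ _ (hmm _)
        by_cases hvq : (q : Fin d → ℤ) + aa ⟨i, hi⟩ = v
        · rw [hπ1 v _ (hvq ▸ hmemg)]
          exact hq q hvq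
        · rw [hπ2 v _ _ hmemg hvq]
          exact Submodule.zero_mem _
  · -- union ⊆ D
    rintro ⟨i, x, ⟨⟨hxQ, hxS⟩, rfl⟩⟩
    have hmemg : (AddMonoidAlgebra.single (⟨x, hxQ⟩ : Q) (1 : k) : R) • mm i ∈
        g (x + aa i) := hgsmul ⟨x, hxQ⟩ _ _ (hmm i)
    have hne : (AddMonoidAlgebra.single (⟨x, hxQ⟩ : Q) (1 : k) : R) • mm i ≠ 0 := by
      intro h0
      exact hxS ⟨hxQ, by rw [h0]; exact Submodule.zero_mem _⟩
    rw [add_comm] at hmemg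
    exact (Submodule.ne_bot_iff _).2 ⟨_, hmemg, hne⟩

end ModulePart
end DegAux

theorem degree_set_is_finite_union_of_translates_of_faces
    {d : ℕ} (k : Type) [Field k] (A : Finset (Fin d → ℤ)) (h0 : (0 : Fin d → ℤ) ∉ A)
    -- M a finitely generated ℤ^d-graded module over k[Q], Q = ℕA
    (M : Type) [AddCommGroup M]
    [Module (AddMonoidAlgebra k (AddSubmonoid.closure (A : Set (Fin d → ℤ)))) M]
    [Module k M]
    [IsScalarTower k (AddMonoidAlgebra k (AddSubmonoid.closure (A : Set (Fin d → ℤ)))) M]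
    (g : (Fin d → ℤ) → Submodule k M)
    (hdecomp : DirectSum.IsInternal g)
    (hgsmul : ∀ (q : AddSubmonoid.closure (A : Set (Fin d → ℤ))) (v : Fin d → ℤ) (m : M),
      m ∈ g v →
      (AddMonoidAlgebra.single q (1 : k) :
        AddMonoidAlgebra k (AddSubmonoid.closure (A : Set (Fin d → ℤ)))) • m ∈ g ((q : Fin d → ℤ) + v))
    (hfg : Module.Finite (AddMonoidAlgebra k (AddSubmonoid.closure (A : Set (Fin d → ℤ)))) M) :
    -- deg(M) is a finite union of translates of faces of Q
    ∃ (n : ℕ) (a : Fin n → (Fin d → ℤ)) (Fs : Fin n → AddSubmonoid (Fin d → ℤ)),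
      (∀ i, IsFace (AddSubmonoid.closure (A : Set (Fin d → ℤ))) (Fs i)) ∧
      {v | g v ≠ ⊥} = ⋃ i, transSet (a i) (Fs i) := by
  classical
  obtain ⟨s, aa, SS, hSS, hD⟩ := DegAux.main_module k A M g hdecomp hgsmul hfg
  have hgood : DegAux.GoodF (AddSubmonoid.closure (A : Set (Fin d → ℤ))) {v | g v ≠ ⊥} := by
    rw [hD]
    apply DegAux.goodF_iUnion_fin
    intro i
    exact DegAux.goodF_tr _ (DegAux.goodF_sdiff A (SS i) (hSS i))
  obtain ⟨P, hP, hPeq⟩ := hgood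
  refine ⟨P.card,
    fun j => ((P.equivFin.symm j : ((Fin d → ℤ) × AddSubmonoid (Fin d → ℤ)))).1,
    fun j => ((P.equivFin.symm j : ((Fin d → ℤ) × AddSubmonoid (Fin d → ℤ)))).2,
    fun j => hP _ (P.equivFin.symm j).2, ?_⟩
  rw [hPeq]
  ext v
  simp only [Set.mem_iUnion]
  constructor
  · rintro ⟨p, hp, hv⟩
    refine ⟨P.equivFin ⟨p, hp⟩, ?_⟩
    rwa [Equiv.symm_apply_apply]
  · rintro ⟨j, hv⟩
    exact ⟨↑(P.equivFin.symm j), (P.equivFin.symm j).2, hv⟩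

end
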